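/- arXiv:1409.7771 — 4 statements merged into one kernel-verified Lean document; each statement's English description precedes it below -/
import Mathlib

section
/- Let C be an assignment of k tokens to n nodes in which each token is held by exactly one node and no node holds more than one token (so k ≤ n). Let C* be the random assignment in which each node holds each token independently with probability 3/4. Consider the bipartite graph on two copies V₁, V₂ of the node set where v ∈ V₁ is joined to u ∈ V₂ iff every token that v holds in C is held by u in C*. Then with probability at least 1 - n·e^{-3n/200} - n·2^{-n/5} this bipartite graph has a perfect matching. -/
open MeasureTheory

/-- The product measure on `Fin n → Fin k → Bool` in which, independently for each
(node, token) pair, the node holds the token (`= true`) with probability `p`. -/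
noncomputable def tokenMeasure (n k : ℕ) (p : ENNReal) (hp : p ≤ 1) :
    Measure (Fin n → Fin k → Bool) :=
  Measure.pi fun _ => Measure.pi fun _ => (PMF.bernoulli p.toNNReal
    (by simpa using ENNReal.toNNReal_mono ENNReal.one_ne_top hp)).toMeasure

section aux

open ENNReal

noncomputable def bernAux : Measure Bool :=
  (PMF.bernoulli (3/4 : ENNReal).toNNReal
    (by simpa using ENNReal.toNNReal_mono ENNReal.one_ne_top
          (show (3/4 : ENNReal) ≤ 1 from ENNReal.div_le_of_le_mul (by norm_num)))).toMeasure

instance : IsProbabilityMeasure bernAux := PMF.toMeasure.isProbabilityMeasure _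

lemma bernAux_true : bernAux {true} = 3/4 := by
  rw [bernAux, PMF.toMeasure_apply_singleton _ _ (measurableSet_singleton _)]
  simp [PMF.bernoulli]
  rw [← ENNReal.toNNReal_div, ENNReal.coe_toNNReal (by finiteness)]

lemma bernAux_false : bernAux {false} = 1/4 := by
  rw [bernAux, PMF.toMeasure_apply_singleton _ _ (measurableSet_singleton _)]
  simp [PMF.bernoulli]
  rw [← ENNReal.toNNReal_div, ENNReal.coe_toNNReal (by finiteness)]
  refine ENNReal.sub_eq_of_eq_add (ENNReal.div_lt_top (by simp) (by simp) |>.ne) ?_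
  rw [← one_div, ENNReal.div_add_div_same]
  norm_num
  rw [ENNReal.div_self (by norm_num) (by norm_num)]

open Set in
lemma pi_map_eval {ι β : Type*} [Fintype ι] [MeasurableSpace β] (μ : Measure β)
    [IsProbabilityMeasure μ] (i : ι) :
    MeasurePreserving (fun x : ι → β => x i) (Measure.pi fun _ => μ) μ := by
  classical
  refine ⟨measurable_pi_apply i, ?_⟩
  ext s hs
  rw [Measure.map_apply (measurable_pi_apply i) hs]
  have : (fun x : ι → β => x i) ⁻¹' s = Set.pi Set.univ (fun j => if j = i then s else univ) := by
    ext x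
    simp only [mem_preimage, Set.mem_pi, mem_univ, true_implies]
    constructor
    · intro h j; split <;> simp_all
    · intro h; have := h i; simp_all
  rw [this, Measure.pi_pi]
  simp only [apply_ite μ, measure_univ]
  rw [Finset.prod_ite_eq' Finset.univ i fun _ => μ s]
  simp

lemma tail_bound (N m : ℕ) :
    (Measure.pi fun _ : Fin N => bernAux)
      {x | m ≤ (Finset.univ.filter fun i => x i = false).card}
      ≤ 2 ^ N * ((3/4) ^ N * (1/3) ^ m) := by
  classical
  set A : Set (Fin N → Bool) := {x | m ≤ (Finset.univ.filter fun i => x i = false).card} with hA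
  set s : Finset (Fin N → Bool) := Finset.univ.filter (· ∈ A) with hs
  have hsub : A ⊆ ⋃ x ∈ s, {x} := by
    intro x hx
    simp [hs, hx]
  calc (Measure.pi fun _ : Fin N => bernAux) A
      ≤ (Measure.pi fun _ : Fin N => bernAux) (⋃ x ∈ s, {x}) := measure_mono hsub
    _ ≤ ∑ x ∈ s, (Measure.pi fun _ : Fin N => bernAux) {x} := measure_biUnion_finset_le s _
    _ ≤ ∑ x ∈ s, ((3/4 : ℝ≥0∞) ^ N * (1/3) ^ m) := by
        refine Finset.sum_le_sum fun x hx => ?_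
        have hxA : x ∈ A := by simpa [hs] using hx
        have hsing : ({x} : Set (Fin N → Bool)) = Set.pi Set.univ (fun i => {x i}) := by
          rw [Set.univ_pi_singleton]
        rw [hsing, Measure.pi_pi]
        have : ∀ i, bernAux {x i} = if x i = false then (1/4 : ℝ≥0∞) else 3/4 := by
          intro i; cases h : x i <;> simp [bernAux_true, bernAux_false]
        rw [Finset.prod_congr rfl fun i _ => this i, Finset.prod_ite, Finset.prod_const,
          Finset.prod_const]
        set F := (Finset.univ.filter fun i => x i = false).card with hF
        have hcards : (Finset.univ.filter fun i => ¬ x i = false).card = N - F := by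
          have := Finset.card_filter_add_card_filter_not
            (s := (Finset.univ : Finset (Fin N))) (p := fun i => x i = false)
          simp only [Finset.card_univ, Fintype.card_fin] at this
          omega
        rw [hcards]
        have hFN : F ≤ N := by
          have := Finset.card_filter_le (Finset.univ : Finset (Fin N)) (fun i => x i = false)
          simpa using this
        have h14 : (1/4 : ℝ≥0∞) = (1/3) * (3/4) := by
          rw [← mul_div_assoc, ENNReal.div_mul_cancel (by norm_num) (by norm_num)]
        rw [h14, mul_pow, mul_assoc, ← pow_add]
        have : F + (N - F) = N := by omega
        rw [this]
        have hmF : (1/3 : ℝ≥0∞) ^ F ≤ (1/3) ^ m :=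
          pow_le_pow_of_le_one (by positivity) (ENNReal.div_le_of_le_mul (by norm_num)) hxA
        calc (1/3 : ℝ≥0∞) ^ F * (3/4) ^ N ≤ (1/3) ^ m * (3/4) ^ N :=
              mul_le_mul_left hmF _
          _ = (3/4 : ℝ≥0∞) ^ N * (1/3) ^ m := mul_comm _ _
    _ ≤ 2 ^ N * ((3/4 : ℝ≥0∞) ^ N * (1/3) ^ m) := by
        rw [Finset.sum_const, nsmul_eq_mul]
        refine mul_le_mul_left ?_ _
        calc (s.card : ℝ≥0∞) ≤ (Finset.univ.card : ℝ≥0∞) := by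
              exact_mod_cast Nat.cast_le.mpr (Finset.card_le_univ s)
          _ = 2 ^ N := by simp [Finset.card_univ]

open Finset in
lemma hall_good (n k : ℕ) (d : ℕ) (o : Fin k → Fin n) (ho : Function.Injective o)
    (ω : Fin n → Fin k → Bool)
    (h1 : ∀ u, (Finset.univ.filter fun t => ω u t = false).card + d ≤ n)
    (h2 : ∀ t, (Finset.univ.filter fun v => ω v t = false).card < d) :
    ∃ f : Fin n ≃ Fin n, ∀ u t, o t = f u → ω u t = true := by
  classical
  set T : Fin n → Finset (Fin n) :=
    fun u => Finset.univ.filter (fun v => ∀ s, o s = v → ω u s = true) with hT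
  have hall : ∀ s : Finset (Fin n), s.card ≤ (s.biUnion T).card := by
    intro s
    by_cases hsd : s.card ≤ d
    · rcases s.eq_empty_or_nonempty with rfl | ⟨u, hu⟩
      · simp
      · have hTu : d ≤ (T u).card := by
          simp only [hT]
          have himg : Finset.univ.filter (fun v => ¬ ∀ s, o s = v → ω u s = true)
              = (Finset.univ.filter fun t => ω u t = false).image o := by
            ext v
            simp only [mem_filter, mem_univ, true_and, mem_image]
            push_neg
            constructor
            · rintro ⟨t, ht, hft⟩
              exact ⟨t, by simpa using hft, ht⟩
            · rintro ⟨t, ht, rfl⟩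
              exact ⟨t, rfl, by simp [ht]⟩
          have hsum := Finset.card_filter_add_card_filter_not
            (s := (Finset.univ : Finset (Fin n)))
            (p := fun v => ∀ s, o s = v → ω u s = true)
          have hcard : ((Finset.univ.filter fun t => ω u t = false).image o).card
              = (Finset.univ.filter fun t => ω u t = false).card :=
            Finset.card_image_of_injective _ ho
          simp only [Finset.card_univ, Fintype.card_fin] at hsum
          rw [himg, hcard] at hsum
          have := h1 u
          omega
        calc s.card ≤ d := hsd
          _ ≤ (T u).card := hTu
          _ ≤ (s.biUnion T).card :=
            Finset.card_le_card (Finset.subset_biUnion_of_mem T hu)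
    · have hsne : s.Nonempty := by
        rw [← Finset.card_pos]; omega
      have : s.biUnion T = Finset.univ := by
        refine Finset.eq_univ_of_forall fun v => ?_
        by_cases hv : ∃ t, o t = v
        · obtain ⟨t, ht⟩ := hv
          set H := Finset.univ.filter (fun u' => ω u' t = true) with hH
          have hHcard : n ≤ H.card + d := by
            simp only [hH]
            have hsum := Finset.card_filter_add_card_filter_not
              (s := (Finset.univ : Finset (Fin n))) (p := fun u' => ω u' t = true)
            simp only [Finset.card_univ, Fintype.card_fin, Bool.not_eq_true] at hsum
            have := h2 t
            omega
          have hinter : (s ∩ H).Nonempty := by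
            rw [← Finset.card_pos]
            have h1' := Finset.card_union_add_card_inter s H
            have h2' : (s ∪ H).card ≤ n := by
              simpa using Finset.card_le_univ (s ∪ H)
            omega
          obtain ⟨u, hu⟩ := hinter
          rw [Finset.mem_inter] at hu
          refine Finset.mem_biUnion.mpr ⟨u, hu.1, ?_⟩
          simp only [hT, mem_filter, mem_univ, true_and]
          intro s' hs'
          have : s' = t := ho (by rw [hs', ht])
          subst this
          simpa [hH] using hu.2
        · obtain ⟨u, hu⟩ := hsne
          refine Finset.mem_biUnion.mpr ⟨u, hu, ?_⟩
          simp only [hT, mem_filter, mem_univ, true_and]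
          intro s' hs'
          exact absurd ⟨s', hs'⟩ hv
      rw [this]
      simpa using Finset.card_le_univ s
  obtain ⟨f, hfinj, hf⟩ := (Finset.all_card_le_biUnion_card_iff_exists_injective T).mp hall
  refine ⟨Equiv.ofBijective f (Finite.injective_iff_bijective.mp hfinj), fun u t hot => ?_⟩
  have hfu := hf u
  simp only [hT, mem_filter, mem_univ, true_and] at hfu
  exact hfu t hot

lemma key1 : Real.log (3/2) + 3/200 ≤ Real.log 3 / 2 := by
  have h34 : Real.log (3/4) ≤ 3/4 - 1 := Real.log_le_sub_one_of_pos (by norm_num)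
  have e1 : Real.log (3/4) = Real.log 3 - Real.log 4 := Real.log_div (by norm_num) (by norm_num)
  have e2 : Real.log 4 = 2 * Real.log 2 := by
    rw [show (4:ℝ) = 2^2 by norm_num, Real.log_pow]; push_cast; ring
  have e3 : Real.log (3/2) = Real.log 3 - Real.log 2 := Real.log_div (by norm_num) (by norm_num)
  linarith

lemma key2 : Real.log (3/2) + Real.log 2 / 5 ≤ Real.log 3 / 2 := by
  have h : Real.log ((3:ℝ)^5) ≤ Real.log ((2:ℝ)^8) :=
    Real.log_le_log (by norm_num) (by norm_num)
  rw [Real.log_pow, Real.log_pow] at h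
  have e3 : Real.log (3/2) = Real.log 3 - Real.log 2 := Real.log_div (by norm_num) (by norm_num)
  push_cast at h
  linarith

lemma exp_form (a : ℝ) (ha : 0 < a) (j : ℕ) : a ^ j = Real.exp (Real.log a * j) := by
  rw [← Real.rpow_natCast a j, Real.rpow_def_of_pos ha]

lemma R1 (n k m : ℕ) (hk : k ≤ n) (hm : n ≤ 2*m) :
    (2:ℝ)^k * ((3/4)^k * (1/3)^m) ≤ Real.exp (-(3*(n:ℝ))/200) := by
  have h32 : (2:ℝ)^k * (3/4)^k = (3/2)^k := by rw [← mul_pow]; norm_num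
  rw [← mul_assoc, h32, exp_form (3/2) (by norm_num), exp_form (1/3) (by norm_num),
    ← Real.exp_add, Real.exp_le_exp]
  have e13 : Real.log (1/3) = - Real.log 3 := by rw [one_div, Real.log_inv]
  rw [e13]
  have h1 : (0:ℝ) ≤ Real.log (3/2) := Real.log_nonneg (by norm_num)
  have h3 : (0:ℝ) ≤ Real.log 3 := Real.log_nonneg (by norm_num)
  have hkn : (k:ℝ) ≤ n := by exact_mod_cast hk
  have hmn : (n:ℝ) ≤ 2*m := by exact_mod_cast hm
  have hnn : (0:ℝ) ≤ n := Nat.cast_nonneg n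
  have k1 := key1
  nlinarith [mul_nonneg h1 (sub_nonneg.mpr hkn), mul_nonneg h3 (by linarith : (0:ℝ) ≤ 2*m - n)]

lemma R2 (n d : ℕ) (hd : n ≤ 2*d) :
    (2:ℝ)^n * ((3/4)^n * (1/3)^d) ≤ (2:ℝ) ^ (-(n:ℝ)/5) := by
  have h32 : (2:ℝ)^n * (3/4)^n = (3/2)^n := by rw [← mul_pow]; norm_num
  rw [← mul_assoc, h32, exp_form (3/2) (by norm_num), exp_form (1/3) (by norm_num),
    ← Real.exp_add, Real.rpow_def_of_pos (by norm_num : (0:ℝ) < 2), Real.exp_le_exp]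
  have e13 : Real.log (1/3) = - Real.log 3 := by rw [one_div, Real.log_inv]
  rw [e13]
  have h1 : (0:ℝ) ≤ Real.log (3/2) := Real.log_nonneg (by norm_num)
  have h3 : (0:ℝ) ≤ Real.log 3 := Real.log_nonneg (by norm_num)
  have h2 : (0:ℝ) ≤ Real.log 2 := Real.log_nonneg (by norm_num)
  have hdn : (n:ℝ) ≤ 2*d := by exact_mod_cast hd
  have hnn : (0:ℝ) ≤ n := Nat.cast_nonneg n
  have k2 := key2
  nlinarith [mul_nonneg h3 (by linarith : (0:ℝ) ≤ 2*d - n)]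

lemma enn_tb (N m : ℕ) :
    (2:ℝ≥0∞)^N * ((3/4)^N * (1/3)^m)
      = ENNReal.ofReal ((2:ℝ)^N * ((3/4)^N * (1/3)^m)) := by
  rw [ENNReal.ofReal_mul (by positivity), ENNReal.ofReal_mul (by positivity),
    ENNReal.ofReal_pow (by norm_num), ENNReal.ofReal_pow (by norm_num),
    ENNReal.ofReal_pow (by norm_num)]
  norm_num [ENNReal.ofReal_div_of_pos]

end aux

/-- Let `C` be an assignment in which token `t` is held exactly by
node `o t`, with `o` injective (each token at exactly one node, no node holding more
than one token, so `k ≤ n`).  Let `C*` be the random assignment `ω` where each node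
holds each token independently with probability `3/4`.  In the bipartite graph on
two copies of the node set where `v ∈ V₁` is joined to `u ∈ V₂` iff every token `v`
holds in `C` is held by `u` in `C*`, a perfect matching (a bijection `f : V₂ ≃ V₁`
with `u` joined to `f u`) exists with probability at least
`1 - n·e^{-3n/200} - n·2^{-n/5}`. -/
theorem stmt_4 (n k : ℕ) (hk : k ≤ n) (o : Fin k → Fin n) (ho : Function.Injective o) :
    ENNReal.ofReal (1 - n * Real.exp (-(3 * (n : ℝ)) / 200) - n * (2 : ℝ) ^ (-(n : ℝ) / 5)) ≤
      tokenMeasure n k (3/4) (by exact ENNReal.div_le_of_le_mul (by norm_num))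
        {ω | ∃ f : Fin n ≃ Fin n, ∀ (u : Fin n) (t : Fin k), o t = f u → ω u t = true} := by
  classical
  set E : Set (Fin n → Fin k → Bool) :=
    {ω | ∃ f : Fin n ≃ Fin n, ∀ (u : Fin n) (t : Fin k), o t = f u → ω u t = true} with hE
  set μ := tokenMeasure n k (3/4) (by exact ENNReal.div_le_of_le_mul (by norm_num)) with hμ
  have htok : μ = Measure.pi (fun _ : Fin n => Measure.pi (fun _ : Fin k => bernAux)) := rfl
  haveI : IsProbabilityMeasure μ := by rw [htok]; infer_instance
  by_cases hn : n = 0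
  · subst hn
    have hEuniv : E = Set.univ := by
      ext ω
      simp only [hE, Set.mem_setOf_eq, Set.mem_univ, iff_true]
      exact ⟨Equiv.refl _, fun u => Fin.elim0 u⟩
    rw [hEuniv, measure_univ]
    simp
  · have hn1 : 1 ≤ n := Nat.one_le_iff_ne_zero.mpr hn
    set d : ℕ := (n+1)/2 with hd
    set m₁ : ℕ := n+1-d with hm₁
    set B1 : Fin n → Set (Fin n → Fin k → Bool) :=
      fun u => {ω | m₁ ≤ (Finset.univ.filter fun t => ω u t = false).card} with hB1
    set B2 : Fin k → Set (Fin n → Fin k → Bool) :=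
      fun t => {ω | d ≤ (Finset.univ.filter fun v => ω v t = false).card} with hB2
    have hsub : Eᶜ ⊆ (⋃ u, B1 u) ∪ (⋃ t, B2 t) := by
      intro ω hω
      by_contra hno
      apply hω
      simp only [Set.mem_union, Set.mem_iUnion, not_or, not_exists, hB1, hB2,
        Set.mem_setOf_eq, not_le] at hno
      refine hall_good n k d o ho ω (fun u => ?_) (fun t => ?_)
      · have := hno.1 u; omega
      · exact hno.2 t
    have hb1 : ∀ u, μ (B1 u) ≤ 2^k * ((3/4 : ENNReal)^k * (1/3)^m₁) := by
      intro u
      have hpre : B1 u = (fun ω : Fin n → Fin k → Bool => ω u) ⁻¹'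
          {x : Fin k → Bool | m₁ ≤ (Finset.univ.filter fun i => x i = false).card} := rfl
      rw [htok, hpre,
        (pi_map_eval (Measure.pi fun _ : Fin k => bernAux) u).measure_preimage
          ((Set.to_countable _).measurableSet.nullMeasurableSet)]
      exact tail_bound k m₁
    have hb2 : ∀ t, μ (B2 t) ≤ 2^n * ((3/4 : ENNReal)^n * (1/3)^d) := by
      intro t
      have mp : MeasurePreserving (fun (ω : Fin n → Fin k → Bool) (v : Fin n) => ω v t)
          (Measure.pi fun _ : Fin n => Measure.pi fun _ : Fin k => bernAux)
          (Measure.pi fun _ : Fin n => bernAux) :=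
        measurePreserving_pi _ _ (fun _ => pi_map_eval bernAux t)
      have hpre : B2 t = (fun (ω : Fin n → Fin k → Bool) (v : Fin n) => ω v t) ⁻¹'
          {x : Fin n → Bool | d ≤ (Finset.univ.filter fun i => x i = false).card} := rfl
      rw [htok, hpre,
        mp.measure_preimage ((Set.to_countable _).measurableSet.nullMeasurableSet)]
      exact tail_bound n d
    set a : ℝ := n * Real.exp (-(3 * (n : ℝ)) / 200) with ha
    set b : ℝ := n * (2 : ℝ) ^ (-(n : ℝ) / 5) with hb
    have ha0 : 0 ≤ a := by
      rw [ha]; positivity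
    have hb0 : 0 ≤ b := by
      rw [hb]; positivity
    have KB1 : (n : ENNReal) * (2^k * ((3/4 : ENNReal)^k * (1/3)^m₁)) ≤ ENNReal.ofReal a := by
      rw [enn_tb, ← ENNReal.ofReal_natCast n, ← ENNReal.ofReal_mul (Nat.cast_nonneg n), ha]
      exact ENNReal.ofReal_le_ofReal
        (mul_le_mul_of_nonneg_left (R1 n k m₁ hk (by omega)) (Nat.cast_nonneg n))
    have KB2 : (k : ENNReal) * (2^n * ((3/4 : ENNReal)^n * (1/3)^d)) ≤ ENNReal.ofReal b := by
      have hkn : (k : ENNReal) ≤ (n : ENNReal) := by exact_mod_cast hk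
      refine le_trans (mul_le_mul_left hkn _) ?_
      rw [enn_tb, ← ENNReal.ofReal_natCast n, ← ENNReal.ofReal_mul (Nat.cast_nonneg n), hb]
      exact ENNReal.ofReal_le_ofReal
        (mul_le_mul_of_nonneg_left (R2 n d (by omega)) (Nat.cast_nonneg n))
    have hcompl : μ Eᶜ ≤ ENNReal.ofReal a + ENNReal.ofReal b := by
      calc μ Eᶜ ≤ μ ((⋃ u, B1 u) ∪ (⋃ t, B2 t)) := measure_mono hsub
        _ ≤ μ (⋃ u, B1 u) + μ (⋃ t, B2 t) := measure_union_le _ _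
        _ ≤ (∑ u : Fin n, μ (B1 u)) + ∑ t : Fin k, μ (B2 t) :=
            add_le_add (measure_iUnion_fintype_le _ _) (measure_iUnion_fintype_le _ _)
        _ ≤ (∑ _u : Fin n, 2^k * ((3/4 : ENNReal)^k * (1/3)^m₁))
              + ∑ _t : Fin k, 2^n * ((3/4 : ENNReal)^n * (1/3)^d) :=
            add_le_add (Finset.sum_le_sum fun u _ => hb1 u) (Finset.sum_le_sum fun t _ => hb2 t)
        _ = (n : ENNReal) * (2^k * ((3/4 : ENNReal)^k * (1/3)^m₁))
              + (k : ENNReal) * (2^n * ((3/4 : ENNReal)^n * (1/3)^d)) := by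
            simp [Finset.sum_const, nsmul_eq_mul]
        _ ≤ ENNReal.ofReal a + ENNReal.ofReal b := add_le_add KB1 KB2
    have hEmeas : MeasurableSet E := (Set.to_countable E).measurableSet
    have hsum1 : μ E + μ Eᶜ = 1 := by rw [measure_add_measure_compl hEmeas]; exact measure_univ
    by_cases hab : 1 - a - b ≤ 0
    · rw [ENNReal.ofReal_of_nonpos hab]
      positivity
    · push_neg at hab
      have h1 : μ Eᶜ ≤ ENNReal.ofReal (a + b) :=
        hcompl.trans_eq (ENNReal.ofReal_add ha0 hb0).symm
      have hEc_ne : μ Eᶜ ≠ ⊤ := measure_ne_top μ _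
      have hchain : ENNReal.ofReal (1 - a - b) + μ Eᶜ ≤ μ E + μ Eᶜ := by
        calc ENNReal.ofReal (1 - a - b) + μ Eᶜ
            ≤ ENNReal.ofReal (1 - a - b) + ENNReal.ofReal (a + b) := add_le_add_right h1 _
          _ = ENNReal.ofReal ((1 - a - b) + (a + b)) :=
              (ENNReal.ofReal_add (by linarith) (by linarith)).symm
          _ = 1 := by norm_num
          _ = μ E + μ Eᶜ := hsum1.symm
      exact (ENNReal.add_le_add_iff_right hEc_ne).mp hchain
end

section
/- Let X be a random variable over [k]^d whose distribution α-fools combinatorial rectangles: for every rectangle R = R₁ × ⋯ × R_d ⊆ [k]^d, |Pr[X ∈ R] − |R|/k^d| ≤ α. Let D ⊆ [k] be nonempty, let j ∈ D, and set d = ⌈k·log(3k/ε)⌉ and α = ε/(3kd). Then the probability that j appears in a coordinate of X before any other element of D (i.e., X ∈ ⋃_{0≤t<d} ([k]\D)^t × {j} × [k]^{d−t−1}) is at least 1/|D| − 2ε/(3k). -/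
open MeasureTheory

/-- Let `X` be a random variable over `[k]^d` (distribution `μ`)
which `α`-fools combinatorial rectangles: for every rectangle
`R = R₁ × ⋯ × R_d ⊆ [k]^d`, `|Pr[X ∈ R] − |R|/k^d| ≤ α`.  Let `D ⊆ [k]` be
nonempty, `j ∈ D`, and set `d = ⌈k·log(3k/ε)⌉`, `α = ε/(3kd)`.  Then the
probability that `j` appears in a coordinate of `X` before any other element of `D`
is at least `1/|D| − 2ε/(3k)`. -/
theorem stmt_8 (k : ℕ) (hk : 0 < k) (ε : ℝ) (hε : 0 < ε) (hεk : ε ≤ k)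
    (d : ℕ) (hd : d = ⌈(k : ℝ) * Real.log (3 * k / ε)⌉₊)
    (α : ℝ) (hα : α = ε / (3 * k * d))
    (μ : Measure (Fin d → Fin k)) [IsProbabilityMeasure μ]
    (hfool : ∀ R : Fin d → Finset (Fin k),
      |(μ {x | ∀ i, x i ∈ R i}).toReal - (∏ i, ((R i).card : ℝ)) / (k : ℝ) ^ d| ≤ α)
    (D : Finset (Fin k)) (hD : D.Nonempty) (j : Fin k) (hj : j ∈ D) :
    ENNReal.ofReal (1 / (D.card : ℝ) - 2 * ε / (3 * k)) ≤
      μ {x | ∃ t : Fin d, x t = j ∧ ∀ s, s < t → x s ∉ D} := by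
  classical
  have hkR : (0:ℝ) < k := by exact_mod_cast hk
  set c := D.card with hc
  have hc1 : 1 ≤ c := hD.card_pos
  have hck : c ≤ k := by
    simpa using (Finset.card_le_univ D)
  have hcR : (0:ℝ) < c := by exact_mod_cast hc1
  -- `3k/ε ≥ 3 > 1`, so `log(3k/ε) > 0`, hence `d ≥ 1`.
  have h3k : (1:ℝ) < 3 * k / ε := by
    rw [lt_div_iff₀ hε]
    nlinarith
  have hlogpos : 0 < Real.log (3 * k / ε) := Real.log_pos h3k
  have hd1 : 1 ≤ d := by
    rw [hd]
    rw [Nat.one_le_iff_ne_zero, ← Nat.pos_iff_ne_zero, Nat.ceil_pos]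
    positivity
  have hdR : (0:ℝ) < d := by exact_mod_cast hd1
  -- the ratio r
  set r : ℝ := ((k:ℝ) - c) / k with hr
  have hr0 : 0 ≤ r := by
    apply div_nonneg _ hkR.le
    have : (c:ℝ) ≤ k := by exact_mod_cast hck
    linarith
  have hr1 : r < 1 := by
    rw [hr, div_lt_one hkR]
    linarith
  -- the rectangles
  set R : Fin d → Fin d → Finset (Fin k) :=
    fun t i => if i < t then Dᶜ else if i = t then {j} else Finset.univ with hR
  have hEset : ∀ t : Fin d, {x : Fin d → Fin k | ∀ i, x i ∈ R t i}
      = {x | x t = j ∧ ∀ s, s < t → x s ∉ D} := by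
    intro t
    ext x
    simp only [Set.mem_setOf_eq, hR]
    constructor
    · intro h
      refine ⟨?_, ?_⟩
      · have := h t
        simpa using this
      · intro s hs
        have := h s
        simp [hs] at this
        simpa using this
    · rintro ⟨h1, h2⟩ i
      rcases lt_trichotomy i t with h | h | h
      · simp [h, h2 i h]
      · simp [h, h1]
      · simp [h.ne', not_lt.mpr h.le]
  -- the union equals the target set
  have hUnion : (⋃ t : Fin d, {x : Fin d → Fin k | ∀ i, x i ∈ R t i})
      = {x | ∃ t : Fin d, x t = j ∧ ∀ s, s < t → x s ∉ D} := by
    ext x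
    simp only [Set.mem_iUnion, hEset, Set.mem_setOf_eq]
  -- disjointness
  have hdisj : Pairwise (Function.onFun Disjoint
      fun t : Fin d => {x : Fin d → Fin k | ∀ i, x i ∈ R t i}) := by
    intro t s hts
    rw [Function.onFun, Set.disjoint_left]
    intro x hxt hxs
    rw [hEset] at hxt hxs
    rcases lt_or_gt_of_ne hts with h | h
    · exact hxs.2 t h (hxt.1 ▸ hj)
    · exact hxt.2 s h (hxs.1 ▸ hj)
  have hmeas : ∀ s : Set (Fin d → Fin k), MeasurableSet s :=
    fun s => (Set.toFinite s).measurableSet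
  -- measure of the union is the sum
  have hsum : μ {x | ∃ t : Fin d, x t = j ∧ ∀ s, s < t → x s ∉ D}
      = ∑ t : Fin d, μ {x | ∀ i, x i ∈ R t i} := by
    rw [← hUnion, measure_iUnion hdisj (fun t => hmeas _), tsum_fintype]
  -- product / volume computation
  have hprod : ∀ t : Fin d,
      (∏ i, ((R t i).card : ℝ)) / (k:ℝ) ^ d = r ^ (t:ℕ) / k := by
    intro t
    have hcardformula : ∀ i : Fin d, ((R t i).card : ℝ)
        = (fun n : ℕ => if n < (t:ℕ) then ((k:ℝ) - c) else if n = (t:ℕ) then 1 else (k:ℝ)) (i:ℕ) := by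
      intro i
      simp only [hR]
      rcases lt_trichotomy i t with h | h | h
      · have hn : (i:ℕ) < (t:ℕ) := h
        rw [if_pos h, if_pos hn, Finset.card_compl, Fintype.card_fin, Nat.cast_sub hck]
      · subst h
        simp
      · have : ¬ (i < t) := not_lt.mpr h.le
        have hn : ¬ ((i:ℕ) < (t:ℕ)) := not_lt.mpr h.le
        have hn' : (i:ℕ) ≠ (t:ℕ) := fun hh => (Fin.ext hh ▸ h).false
        rw [if_neg this, if_neg (fun hh => (hh ▸ h).false), if_neg hn, if_neg hn']
        simp
    have ht : (t:ℕ) < d := t.isLt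
    have hprodval : (∏ i, ((R t i).card : ℝ))
        = ((k:ℝ) - c) ^ (t:ℕ) * (k:ℝ) ^ (d - 1 - (t:ℕ)) := by
      have e1 : (∏ n ∈ Finset.range (t:ℕ),
          (if n < (t:ℕ) then ((k:ℝ) - c) else if n = (t:ℕ) then 1 else (k:ℝ)))
          = ((k:ℝ) - c) ^ (t:ℕ) := by
        rw [Finset.prod_congr rfl (g := fun _ => ((k:ℝ) - c)) (fun n hn => by
          rw [Finset.mem_range] at hn
          rw [if_pos hn]), Finset.prod_const, Finset.card_range]
      have e2 : (∏ n ∈ Finset.Ico ((t:ℕ).succ) d,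
          (if n < (t:ℕ) then ((k:ℝ) - c) else if n = (t:ℕ) then 1 else (k:ℝ)))
          = (k:ℝ) ^ (d - 1 - (t:ℕ)) := by
        rw [Finset.prod_congr rfl (g := fun _ => (k:ℝ)) (fun n hn => by
          rw [Finset.mem_Ico] at hn
          rw [if_neg (by omega), if_neg (by omega)]), Finset.prod_const, Nat.card_Ico]
        congr 1
        omega
      calc (∏ i, ((R t i).card : ℝ))
          = ∏ i : Fin d, (fun n : ℕ => if n < (t:ℕ) then ((k:ℝ) - c) else if n = (t:ℕ) then 1 else (k:ℝ)) (i:ℕ) :=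
            Finset.prod_congr rfl (fun i _ => hcardformula i)
        _ = ∏ n ∈ Finset.range d, (if n < (t:ℕ) then ((k:ℝ) - c) else if n = (t:ℕ) then 1 else (k:ℝ)) := by
            exact Fin.prod_univ_eq_prod_range
              (fun n : ℕ => if n < (t:ℕ) then ((k:ℝ) - c) else if n = (t:ℕ) then 1 else (k:ℝ)) d
        _ = ((k:ℝ) - c) ^ (t:ℕ) * (k:ℝ) ^ (d - 1 - (t:ℕ)) := by
            rw [← Finset.prod_range_mul_prod_Ico _ (Nat.succ_le_of_lt ht),
              Finset.prod_range_succ, e1, e2]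
            simp
    rw [hprodval]
    have hkd : (k:ℝ) ^ d = (k:ℝ) ^ (t:ℕ) * (k:ℝ) * (k:ℝ) ^ (d - 1 - (t:ℕ)) := by
      rw [← pow_succ, ← pow_add]
      congr 1
      omega
    have hkne : (k:ℝ) ≠ 0 := hkR.ne'
    rw [hkd, hr, div_pow]
    field_simp
  -- per-rectangle lower bound
  have hlower : ∀ t : Fin d, r ^ (t:ℕ) / k - α ≤ (μ {x | ∀ i, x i ∈ R t i}).toReal := by
    intro t
    have := hfool (R t)
    rw [abs_le] at this
    have h1 := this.1
    rw [hprod t] at h1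
    linarith
  -- sum up
  have hαpos : 0 < α := by
    rw [hα]; positivity
  have hsumtoReal : (μ {x | ∃ t : Fin d, x t = j ∧ ∀ s, s < t → x s ∉ D}).toReal
      = ∑ t : Fin d, (μ {x | ∀ i, x i ∈ R t i}).toReal := by
    rw [hsum, ENNReal.toReal_sum (fun t _ => measure_ne_top μ _)]
  have hgeom : ∑ t : Fin d, (r ^ (t:ℕ) / (k:ℝ)) = (1 - r ^ d) / c := by
    have hrne1 : r ≠ 1 := hr1.ne
    have : ∑ t : Fin d, (r ^ (t:ℕ) / (k:ℝ)) = (∑ n ∈ Finset.range d, r ^ n) / k := by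
      rw [Finset.sum_div]
      exact Fin.sum_univ_eq_sum_range (fun n => r ^ n / k) d
    rw [this, geom_sum_eq hrne1]
    have hkne : (k:ℝ) ≠ 0 := hkR.ne'
    have hcne : (c:ℝ) ≠ 0 := hcR.ne'
    have hrsub : r - 1 = -((c:ℝ)/k) := by
      rw [hr]; field_simp; ring
    rw [hrsub]
    field_simp
    ring
  -- tail bound : r^d ≤ ε/(3k)
  have htail : r ^ d ≤ ε / (3 * k) := by
    have hstep : r ≤ Real.exp (-(1:ℝ)/k) := by
      have h1 : 1 + (-(1:ℝ)/k) ≤ Real.exp (-(1:ℝ)/k) := by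
        simpa [add_comm] using Real.add_one_le_exp (-(1:ℝ)/k)
      have h2 : r ≤ 1 - 1/(k:ℝ) := by
        rw [hr]
        rw [div_le_iff₀ hkR]
        have : (1:ℝ) ≤ c := by exact_mod_cast hc1
        field_simp
        linarith
      calc r ≤ 1 - 1/(k:ℝ) := h2
        _ = 1 + (-(1:ℝ)/k) := by ring
        _ ≤ Real.exp (-(1:ℝ)/k) := h1
    have hpow : r ^ d ≤ Real.exp (-(1:ℝ)/k) ^ d := pow_le_pow_left₀ hr0 hstep d
    have hexp : Real.exp (-(1:ℝ)/k) ^ d = Real.exp (-(d:ℝ)/k) := by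
      rw [← Real.exp_nat_mul]
      congr 1
      ring
    have hdge : (k:ℝ) * Real.log (3 * k / ε) ≤ d := by
      rw [hd]; exact Nat.le_ceil _
    have hmono : Real.exp (-(d:ℝ)/k) ≤ Real.exp (-(Real.log (3 * k / ε))) := by
      apply Real.exp_le_exp.mpr
      rw [neg_div, neg_le_neg_iff, le_div_iff₀ hkR]
      linarith [hdge]
    have hfinal : Real.exp (-(Real.log (3 * k / ε))) = ε / (3 * k) := by
      rw [Real.exp_neg, Real.exp_log (by positivity)]
      rw [inv_div]
    calc r ^ d ≤ Real.exp (-(1:ℝ)/k) ^ d := hpow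
      _ = Real.exp (-(d:ℝ)/k) := hexp
      _ ≤ Real.exp (-(Real.log (3 * k / ε))) := hmono
      _ = ε / (3 * k) := hfinal
  -- put it together
  have hdα : (d:ℝ) * α = ε / (3 * k) := by
    rw [hα]
    field_simp
  have hmain : 1 / (c:ℝ) - 2 * ε / (3 * k)
      ≤ (μ {x | ∃ t : Fin d, x t = j ∧ ∀ s, s < t → x s ∉ D}).toReal := by
    rw [hsumtoReal]
    have h1 : ∑ t : Fin d, (r ^ (t:ℕ) / (k:ℝ) - α)
        ≤ ∑ t : Fin d, (μ {x | ∀ i, x i ∈ R t i}).toReal :=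
      Finset.sum_le_sum (fun t _ => hlower t)
    have h2 : ∑ t : Fin d, (r ^ (t:ℕ) / (k:ℝ) - α) = (1 - r ^ d) / c - d * α := by
      rw [Finset.sum_sub_distrib, hgeom, Finset.sum_const]
      simp [mul_comm]
    rw [h2, hdα] at h1
    have h3 : 1 / (c:ℝ) - 2 * ε / (3 * k) ≤ (1 - r ^ d) / c - ε / (3 * k) := by
      have : r ^ d / (c:ℝ) ≤ ε / (3 * k) := by
        calc r ^ d / (c:ℝ) ≤ r ^ d / 1 := by
              apply div_le_div_of_nonneg_left (pow_nonneg hr0 d) one_pos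
              exact_mod_cast hc1
          _ = r ^ d := div_one _
          _ ≤ ε / (3 * k) := htail
      have heq : (1 - r ^ d) / (c:ℝ) = 1 / c - r ^ d / c := by ring
      have h2e : 2 * ε / (3 * (k:ℝ)) = ε / (3 * k) + ε / (3 * k) := by ring
      rw [heq]
      linarith
    linarith
  rw [ENNReal.ofReal_le_iff_le_toReal (measure_ne_top μ _)]
  exact hmain
end

section
/- In the evolution graph over ℓ rounds, if P is a set of edge-disjoint directed paths from source copies at level 0 to sink copies at level ℓ such that for each sink node v and each token i there is a distinct path in P from a source holding token i to v, then there exists a feasible ℓ-round token-forwarding schedule (each node sending at most one token per edge per round) after which every sink node holds all k tokens. -/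
open Classical in
/-- Holdings of tokens under a token-forwarding schedule `send` on the dynamic
network `G`: `send r u v = some t` means `u` sends token `t` to `v` along the edge
`(u,v)` of `G r` in round `r+1` (at most one token per edge per round); a node
gains a token only if the sender actually holds it. -/
noncomputable def schedRun {V : Type*} (k : ℕ) (G : ℕ → SimpleGraph V)
    (init : V → Finset (Fin k)) (send : ℕ → V → V → Option (Fin k)) :
    ℕ → V → Finset (Fin k)
  | 0 => init
  | r + 1 => fun v =>
      schedRun k G init send r v ∪
        Finset.univ.filter fun t =>
          ∃ u, (G r).Adj u v ∧ send r u v = some t ∧ t ∈ schedRun k G init send r u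

/-- Evolution graph paths yield a schedule.  The evolution graph
of `G 0, …, G (ℓ-1)` has a copy of each node at each level `0, …, ℓ`; buffer edges
keep a node at the same vertex between consecutive levels and transmit edges
`(u_r, v_{r+1})` exist when `(G r).Adj u v`.  A path from level `0` to level `ℓ` is
described by its node at each level, `p v i : ℕ → V`.  If for each sink `v ∈ T` and
each token `i` there is a path `p v i` starting at a node holding `i`, ending at
`v`, moving along buffer or transmit edges, and these paths are pairwise disjoint
on transmit edges, then there is a feasible `ℓ`-round schedule (each node sending
at most one token per edge per round, senders holding what they send) after which
every sink holds all `k` tokens. -/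
theorem stmt_11 {V : Type*} (k ℓ : ℕ) (G : ℕ → SimpleGraph V)
    (init : V → Finset (Fin k)) (T : Finset V) (p : V → Fin k → ℕ → V)
    (hstart : ∀ v ∈ T, ∀ i : Fin k, i ∈ init (p v i 0))
    (hend : ∀ v ∈ T, ∀ i : Fin k, p v i ℓ = v)
    (hstep : ∀ v ∈ T, ∀ i : Fin k, ∀ r < ℓ,
      p v i (r + 1) = p v i r ∨ (G r).Adj (p v i r) (p v i (r + 1)))
    (hdisj : ∀ v ∈ T, ∀ w ∈ T, ∀ i j : Fin k, (v, i) ≠ (w, j) → ∀ r < ℓ,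
      ¬(p v i r ≠ p v i (r + 1) ∧ p v i r = p w j r ∧ p v i (r + 1) = p w j (r + 1))) :
    ∃ send : ℕ → V → V → Option (Fin k),
      (∀ r u w t, send r u w = some t → (G r).Adj u w ∧ t ∈ schedRun k G init send r u) ∧
      ∀ v ∈ T, ∀ i : Fin k, i ∈ schedRun k G init send ℓ v := by
  classical
  -- condition that the pair (v,i)'s path uses the transmit edge (u, w) at round r
  set Q : ℕ → V → V → V × Fin k → Prop := fun r u w vi =>
    vi.1 ∈ T ∧ r < ℓ ∧ p vi.1 vi.2 r = u ∧ p vi.1 vi.2 (r + 1) = w ∧ u ≠ w with hQ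
  set send : ℕ → V → V → Option (Fin k) := fun r u w =>
    if h : ∃ vi, Q r u w vi then some h.choose.2 else none with hsend
  -- If send r u w = some t then some pair witnesses it
  have hsome : ∀ r u w t, send r u w = some t →
      ∃ vi : V × Fin k, Q r u w vi ∧ vi.2 = t := by
    intro r u w t h
    rw [hsend] at h
    simp only at h
    split at h
    · next hex =>
      exact ⟨hex.choose, hex.choose_spec, Option.some_injective _ h⟩
    · exact absurd h (by simp)
  -- if a pair (v,i) uses edge (u,w) at round r then send sends token i
  have hsends : ∀ r (v : V) (i : Fin k), v ∈ T → r < ℓ →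
      p v i r ≠ p v i (r + 1) →
      send r (p v i r) (p v i (r + 1)) = some i := by
    intro r v i hv hr hne
    have hex : ∃ vi, Q r (p v i r) (p v i (r + 1)) vi :=
      ⟨(v, i), hv, hr, rfl, rfl, hne⟩
    have hspec := hex.choose_spec
    obtain ⟨hT', hr', h1, h2, hne'⟩ := hspec
    have heq : (v, i) = hex.choose := by
      by_contra hne2
      exact hdisj v hv hex.choose.1 hT' i hex.choose.2 hne2 r hr
        ⟨hne, by rw [h1], by rw [h2]⟩
    rw [hsend]
    simp only [dif_pos hex]
    rw [← heq]
  -- the main invariant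
  have key : ∀ r, r ≤ ℓ → ∀ v ∈ T, ∀ i : Fin k,
      i ∈ schedRun k G init send r (p v i r) := by
    intro r
    induction r with
    | zero => intro _ v hv i; exact hstart v hv i
    | succ r ih =>
      intro hr v hv i
      have hr' : r < ℓ := hr
      have ihv := ih (Nat.le_of_lt hr') v hv i
      show i ∈ schedRun k G init send r (p v i (r+1)) ∪ _
      rcases hstep v hv i r hr' with he | ha
      · rw [he]; exact Finset.mem_union_left _ ihv
      · have hne : p v i r ≠ p v i (r + 1) := ha.ne
        refine Finset.mem_union_right _ ?_
        simp only [Finset.mem_filter, Finset.mem_univ, true_and]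
        exact ⟨p v i r, ha, hsends r v i hv hr' hne, ihv⟩
  refine ⟨send, ?_, ?_⟩
  · intro r u w t h
    obtain ⟨vi, ⟨hT', hr', h1, h2, hne'⟩, ht⟩ := hsome r u w t h
    have hadj : (G r).Adj u w := by
      rcases hstep vi.1 hT' vi.2 r hr' with he | ha
      · exact absurd (h2 ▸ h1 ▸ he) (Ne.symm hne')
      · rwa [h1, h2] at ha
    refine ⟨hadj, ?_⟩
    have := key r (Nat.le_of_lt hr') vi.1 hT' vi.2
    rwa [h1, ht] at this
  · intro v hv i
    have := key ℓ le_rfl v hv i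
    rwa [hend v hv i] at this
end

section
/- Suppose in each round colored 'blue' there are r groups (maximal sets of nodes holding identical token sets), the total number of missing (node, token) pairs is at most (n+k)·r, and each blue round makes at least c·r/log k units of progress (token receipts) for a fixed constant c > 0. If blue rounds are partitioned into at most log₂ n classes by label r ∈ [s/2^i, s/2^{i−1}) with labels non-increasing over time, then each class contains at most O((n+k)·(log k)/c) blue rounds, so the total number of blue rounds is O((n+k)·log n·log k). -/
/-- Telescoping sum of decrements. -/
lemma telescope_sum (M : ℕ → ℕ) (a m : ℕ) :
    ∑ t ∈ Finset.Ico a (a + m), ((M t : ℝ) - (M (t + 1) : ℝ))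
      = (M a : ℝ) - (M (a + m) : ℝ) := by
  induction m with
  | zero => simp
  | succ m ih =>
      rw [← Nat.add_assoc, Finset.sum_Ico_succ_top (Nat.le_add_right a m), ih]
      ring_nf

/-- Counting blue rounds.  `label t` is the number of groups
(maximal sets of nodes with identical token sets) in round `t` and `M t` the total
number of missing (node, token) pairs at the start of round `t`.  Suppose labels
are non-increasing over time and bounded by `n`, missing pairs never increase, in
every blue round `t` the missing pairs satisfy `M t ≤ (n+k)·label t`, and every
blue round makes progress at least `c·(label t)/log k` (i.e. `M` decreases by at
least that much).  Partitioning the blue rounds into at most `log₂ n + 1` dyadic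
label classes, each class contains at most `2(n+k)(log k)/c` blue rounds, so in
total there are at most `2(n+k)·(log k)·(log₂ n + 1)/c = O((n+k) log n log k)`
blue rounds. -/
theorem stmt_19 (n k : ℕ) (hn : 2 ≤ n) (hk : 2 ≤ k) (c : ℝ) (hc : 0 < c)
    (label M : ℕ → ℕ) (Blue : Finset ℕ)
    (hlabel_mono : ∀ t t' : ℕ, t ≤ t' → label t' ≤ label t)
    (hlabel_pos : ∀ t ∈ Blue, 1 ≤ label t)
    (hlabel_le : ∀ t, label t ≤ n)
    (hM_mono : ∀ t, M (t + 1) ≤ M t)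
    (hmiss : ∀ t ∈ Blue, M t ≤ (n + k) * label t)
    (hprog : ∀ t ∈ Blue, c * (label t : ℝ) / Real.log k ≤ (M t : ℝ) - (M (t + 1) : ℝ)) :
    (Blue.card : ℝ) ≤ 2 * (n + k : ℝ) * Real.log k * (Real.logb 2 n + 1) / c := by
  have hlogk : 0 < Real.log k :=
    Real.log_pos (by exact_mod_cast lt_of_lt_of_le one_lt_two (by exact_mod_cast hk))
  have hnk : (0 : ℝ) < (n : ℝ) + (k : ℝ) := by positivity
  set L := Nat.log 2 n with hL
  set S : ℕ → Finset ℕ := fun i => Blue.filter (fun t => Nat.log 2 (label t) = i) with hS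
  set B : ℝ := 2 * ((n : ℝ) + k) * Real.log k / c with hB
  have hBnonneg : 0 ≤ B := by
    apply div_nonneg _ hc.le
    positivity
  -- per-class bound
  have hclass : ∀ i, ((S i).card : ℝ) ≤ B := by
    intro i
    rcases Finset.eq_empty_or_nonempty (S i) with he | hne
    · simp [he, hBnonneg]
    · set a := (S i).min' hne with ha
      set b := (S i).max' hne with hb
      have haS : a ∈ S i := Finset.min'_mem _ _
      have haB : a ∈ Blue := (Finset.mem_filter.mp haS).1
      have halog : Nat.log 2 (label a) = i := (Finset.mem_filter.mp haS).2
      have hab : a ≤ b := Finset.min'_le _ _ (Finset.max'_mem _ _)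
      have hlb : ∀ t ∈ S i, (2 : ℕ) ^ i ≤ label t := by
        intro t ht
        have htB : t ∈ Blue := (Finset.mem_filter.mp ht).1
        have := Nat.pow_log_le_self 2 (Nat.one_le_iff_ne_zero.mp (hlabel_pos t htB))
        rwa [(Finset.mem_filter.mp ht).2] at this
      have hub : label a < 2 ^ (i + 1) := by
        have := Nat.lt_pow_succ_log_self (by norm_num : 1 < 2) (label a)
        rwa [halog] at this
      have hsub : S i ⊆ Finset.Ico a (a + (b + 1 - a)) := by
        intro t ht
        have h1 : a ≤ t := Finset.min'_le _ _ ht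
        have h2 : t ≤ b := Finset.le_max' _ _ ht
        rw [Finset.mem_Ico]
        omega
      have hterm_nonneg : ∀ t, (0 : ℝ) ≤ (M t : ℝ) - (M (t + 1) : ℝ) := by
        intro t
        have h := hM_mono t
        have h' : (M (t + 1) : ℝ) ≤ (M t : ℝ) := by exact_mod_cast h
        linarith
      have hsum_le : ∑ t ∈ S i, ((M t : ℝ) - (M (t + 1) : ℝ)) ≤ (M a : ℝ) := by
        calc ∑ t ∈ S i, ((M t : ℝ) - (M (t + 1) : ℝ))
            ≤ ∑ t ∈ Finset.Ico a (a + (b + 1 - a)), ((M t : ℝ) - (M (t + 1) : ℝ)) :=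
              Finset.sum_le_sum_of_subset_of_nonneg hsub (fun t _ _ => hterm_nonneg t)
          _ = (M a : ℝ) - (M (a + (b + 1 - a)) : ℝ) := telescope_sum M a _
          _ ≤ (M a : ℝ) := by
              have : (0 : ℝ) ≤ (M (a + (b + 1 - a)) : ℝ) := by positivity
              linarith
      have hlower : ((S i).card : ℝ) * (c * (2 : ℝ) ^ i / Real.log k)
          ≤ ∑ t ∈ S i, ((M t : ℝ) - (M (t + 1) : ℝ)) := by
        have := Finset.card_nsmul_le_sum (S i)
          (fun t => (M t : ℝ) - (M (t + 1) : ℝ)) (c * (2 : ℝ) ^ i / Real.log k)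
          (fun t ht => by
            have h1 := hprog t ((Finset.mem_filter.mp ht).1)
            have h2 : ((2 : ℝ)) ^ i ≤ (label t : ℝ) := by exact_mod_cast hlb t ht
            refine le_trans ?_ h1
            gcongr)
        simpa [nsmul_eq_mul] using this
      have hupper : (M a : ℝ) ≤ ((n : ℝ) + k) * (2 : ℝ) ^ (i + 1) := by
        have h1 : (M a : ℝ) ≤ ((n : ℝ) + k) * (label a : ℝ) := by
          have := hmiss a haB
          push_cast at this ⊢
          exact_mod_cast this
        have h2 : (label a : ℝ) ≤ (2 : ℝ) ^ (i + 1) := by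
          exact_mod_cast hub.le
        calc (M a : ℝ) ≤ ((n : ℝ) + k) * (label a : ℝ) := h1
          _ ≤ ((n : ℝ) + k) * (2 : ℝ) ^ (i + 1) := by gcongr
      have hkey : ((S i).card : ℝ) * (c * (2 : ℝ) ^ i / Real.log k)
          ≤ B * (c * (2 : ℝ) ^ i / Real.log k) := by
        have hBeq : B * (c * (2 : ℝ) ^ i / Real.log k) = ((n : ℝ) + k) * (2 : ℝ) ^ (i + 1) := by
          rw [hB]
          field_simp
          ring
        rw [hBeq]
        exact le_trans hlower (le_trans hsum_le hupper)
      have hpos : 0 < c * (2 : ℝ) ^ i / Real.log k := by positivity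
      exact le_of_mul_le_mul_right hkey hpos
  -- cover
  have hcover : Blue ⊆ (Finset.range (L + 1)).biUnion S := by
    intro t ht
    rw [Finset.mem_biUnion]
    refine ⟨Nat.log 2 (label t), ?_, by simp [hS, ht]⟩
    rw [Finset.mem_range, Nat.lt_succ_iff]
    exact Nat.log_mono_right (hlabel_le t)
  have hcard : (Blue.card : ℝ) ≤ ((L : ℝ) + 1) * B := by
    have h1 : Blue.card ≤ ∑ i ∈ Finset.range (L + 1), (S i).card :=
      le_trans (Finset.card_le_card hcover) (Finset.card_biUnion_le)
    have h2 : (Blue.card : ℝ) ≤ ∑ i ∈ Finset.range (L + 1), ((S i).card : ℝ) := by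
      exact_mod_cast h1
    calc (Blue.card : ℝ) ≤ ∑ i ∈ Finset.range (L + 1), ((S i).card : ℝ) := h2
      _ ≤ ∑ i ∈ Finset.range (L + 1), B := Finset.sum_le_sum (fun i _ => hclass i)
      _ = ((L : ℝ) + 1) * B := by
          rw [Finset.sum_const, Finset.card_range]
          push_cast
          ring
  have hLle : (L : ℝ) ≤ Real.logb 2 n := by
    have h1 : ((2 : ℕ) ^ L : ℕ) ≤ n := Nat.pow_log_le_self 2 (by omega)
    have h2 : ((2 : ℝ)) ^ L ≤ (n : ℝ) := by exact_mod_cast h1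
    have h3 : Real.logb 2 ((2 : ℝ) ^ L) ≤ Real.logb 2 n :=
      Real.logb_le_logb_of_le one_lt_two (by positivity) h2
    rwa [Real.logb_pow, Real.logb_self_eq_one one_lt_two, mul_one] at h3
  have hgoal : 2 * ((n : ℝ) + k) * Real.log k * (Real.logb 2 n + 1) / c
      = (Real.logb 2 n + 1) * B := by
    rw [hB]; ring
  rw [hgoal]
  calc (Blue.card : ℝ) ≤ ((L : ℝ) + 1) * B := hcard
    _ ≤ (Real.logb 2 n + 1) * B := by
        apply mul_le_mul_of_nonneg_right _ hBnonneg
        linarith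
end
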